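/- Let f : (0,s) → [0,∞) be nondecreasing and satisfy, for a.e. r ∈ (0,s): either f'(r) ≥ c·r^(n-1), or (f^(1/n))'(r) ≥ c, where c > 0 and n ≥ 1, with Df ≥ f'·dr. Then there exists c₀ > 0 depending only on n and c such that f(r) ≥ c₀·rⁿ for all r ∈ (0,s). (Hint: split (0,s) into the sets L₁, L₂ where each alternative holds; at least one has measure ≥ s/2, and integrate over the corresponding set.) -/

import Mathlib

open MeasureTheory Set

lemma aux_deriv (G : ℝ → ℝ) (hG : Monotone G) (a r : ℝ) :
    IntegrableOn (deriv G) (Ioc a r) volume ∧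
      (∀ᵐ t ∂(volume.restrict (Ioc a r)), 0 ≤ deriv G t) := by
  set d : ℝ → ℝ := fun t => (Measure.rnDeriv hG.stieltjesFunction.measure volume t).toReal with hd
  have h1 : deriv G =ᵐ[volume] d := by
    filter_upwards [hG.ae_hasDerivAt] with t ht
    exact ht.deriv
  have hfin : hG.stieltjesFunction.measure (Ioc a r) ≠ ⊤ := by
    rw [StieltjesFunction.measure_Ioc]
    exact ENNReal.ofReal_ne_top
  have hint : IntegrableOn d (Ioc a r) volume :=
    Measure.integrableOn_toReal_rnDeriv hfin
  refine ⟨hint.congr_fun_ae (ae_restrict_of_ae h1.symm), ?_⟩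
  filter_upwards [ae_restrict_of_ae h1] with t ht
  rw [ht]
  exact ENNReal.toReal_nonneg

set_option maxHeartbeats 1000000 in
theorem stmt3 (n : ℕ) (hn : 1 ≤ n) (s c : ℝ) (hs : 0 < s) (hc : 0 < c) :
    ∃ c₀ : ℝ, 0 < c₀ ∧ ∀ f : ℝ → ℝ,
      MonotoneOn f (Ioo 0 s) → (∀ r ∈ Ioo 0 s, 0 ≤ f r) →
      (∀ a b : ℝ, 0 < a → a ≤ b → b < s → ∫ r in a..b, deriv f r ≤ f b - f a) →
      (∀ a b : ℝ, 0 < a → a ≤ b → b < s →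
        ∫ r in a..b, deriv (fun t => f t ^ ((1 : ℝ) / n)) r
          ≤ f b ^ ((1 : ℝ) / n) - f a ^ ((1 : ℝ) / n)) →
      (∀ᵐ r ∂(volume : Measure ℝ), r ∈ Ioo 0 s →
        (c * r ^ (n - 1) ≤ deriv f r ∨ c ≤ deriv (fun t => f t ^ ((1 : ℝ) / n)) r)) →
      ∀ r ∈ Ioo 0 s, c₀ * r ^ n ≤ f r := by
  obtain ⟨m, rfl⟩ : ∃ m, n = m + 1 := ⟨n - 1, (Nat.succ_pred_eq_of_pos hn).symm⟩
  refine ⟨min ((c / 4) ^ (m + 1)) (c / 2 ^ (m + 2)), by positivity, ?_⟩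
  intro f hmono hpos hDf hDg hae r hr
  simp only [Nat.add_sub_cancel] at hae
  obtain ⟨hr0, hrs⟩ := hr
  set a := r / 2 with ha_def
  set u := r / 4 with hu_def
  set v := (r + s) / 2 with hv_def
  have ha0 : 0 < a := by positivity
  have har : a ≤ r := by rw [ha_def]; linarith
  have has : a < s := by rw [ha_def]; linarith
  have hu0 : 0 < u := by positivity
  have hua : u < a := by rw [hu_def, ha_def]; linarith
  have hrv : r < v := by rw [hv_def]; linarith
  have hvs : v < s := by rw [hv_def]; linarith
  -- clamp construction
  set π : ℝ → ℝ := fun x => max u (min x v) with hπ_def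
  have hπmem : ∀ x, π x ∈ Ioo 0 s := by
    intro x
    constructor
    · exact lt_of_lt_of_le hu0 (le_max_left _ _)
    · have h1 : min x v ≤ v := min_le_right _ _
      have : π x ≤ v := max_le (by linarith [hua, har, hrv]) h1
      linarith
  have hπmono : Monotone π := fun x y h =>
    max_le_max le_rfl (min_le_min h le_rfl)
  have hπeq : ∀ t ∈ Ioo u v, π t = t := by
    intro t ht
    rw [hπ_def]
    simp only
    rw [min_eq_left ht.2.le, max_eq_right ht.1.le]
  set G : ℝ → ℝ := fun x => f (π x) with hG_def
  have hGmono : Monotone G := fun x y h => hmono (hπmem x) (hπmem y) (hπmono h)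
  have hGnonneg : ∀ x, 0 ≤ G x := fun x => hpos _ (hπmem x)
  set gf : ℝ → ℝ := fun t => f t ^ ((1 : ℝ) / (m + 1 : ℕ)) with hgf_def
  set Gg : ℝ → ℝ := fun x => G x ^ ((1 : ℝ) / (m + 1 : ℕ)) with hGg_def
  have hGgmono : Monotone Gg := fun x y h =>
    Real.rpow_le_rpow (hGnonneg x) (hGmono h) (by positivity)
  have hsub : Ioc a r ⊆ Ioo u v := fun t ht => ⟨lt_of_lt_of_le hua ht.1.le, lt_of_le_of_lt ht.2 hrv⟩
  have hfeq : ∀ t ∈ Ioc a r, f =ᶠ[nhds t] G := by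
    intro t ht
    filter_upwards [isOpen_Ioo.mem_nhds (hsub ht)] with x hx
    rw [hG_def]
    simp only
    rw [hπeq x hx]
  have hderiv_eqf : ∀ t ∈ Ioc a r, deriv f t = deriv G t :=
    fun t ht => (hfeq t ht).deriv_eq
  have hderiv_eqg : ∀ t ∈ Ioc a r, deriv gf t = deriv Gg t := by
    intro t ht
    apply Filter.EventuallyEq.deriv_eq
    filter_upwards [hfeq t ht] with x hx
    rw [hgf_def, hGg_def]
    simp only
    rw [hx]
  obtain ⟨hintG, hnnG⟩ := aux_deriv G hGmono a r
  obtain ⟨hintGg, hnnGg⟩ := aux_deriv Gg hGgmono a r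
  have hintf : IntegrableOn (deriv f) (Ioc a r) volume :=
    hintG.congr_fun (fun t ht => (hderiv_eqf t ht).symm) measurableSet_Ioc
  have hintg : IntegrableOn (deriv gf) (Ioc a r) volume :=
    hintGg.congr_fun (fun t ht => (hderiv_eqg t ht).symm) measurableSet_Ioc
  have hnnf : ∀ᵐ t ∂(volume.restrict (Ioc a r)), 0 ≤ deriv f t := by
    filter_upwards [hnnG, ae_restrict_mem measurableSet_Ioc] with t h1 h2
    rw [hderiv_eqf t h2]; exact h1
  have hnng : ∀ᵐ t ∂(volume.restrict (Ioc a r)), 0 ≤ deriv gf t := by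
    filter_upwards [hnnGg, ae_restrict_mem measurableSet_Ioc] with t h1 h2
    rw [hderiv_eqg t h2]; exact h1
  -- the two sets
  set L₁ : Set ℝ := Ioo a r ∩ {t | c * t ^ m ≤ deriv f t} with hL₁_def
  set L₂ : Set ℝ := Ioo a r ∩ {t | c ≤ deriv gf t} with hL₂_def
  have hL₁m : MeasurableSet L₁ :=
    measurableSet_Ioo.inter (measurableSet_le ((measurable_id.pow_const m).const_mul c) (measurable_deriv f))
  have hL₂m : MeasurableSet L₂ :=
    measurableSet_Ioo.inter (measurableSet_le measurable_const (measurable_deriv gf))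
  have hcover : volume (Ioo a r \ (L₁ ∪ L₂)) = 0 := by
    refine measure_mono_null ?_ (ae_iff.1 hae)
    intro t ht
    simp only [mem_diff, mem_union, hL₁_def, hL₂_def, mem_inter_iff, mem_setOf_eq] at ht
    simp only [mem_setOf_eq]
    intro h
    have ht0s : t ∈ Ioo 0 s := ⟨lt_trans ha0 ht.1.1, lt_trans ht.1.2 hrs⟩
    rcases h ht0s with h1 | h1
    · exact ht.2 (Or.inl ⟨ht.1, h1⟩)
    · exact ht.2 (Or.inr ⟨ht.1, h1⟩)
  have hμIoo : ENNReal.ofReal (r - a) ≤ volume L₁ + volume L₂ := by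
    have hss : Ioo a r ⊆ (L₁ ∪ L₂) ∪ (Ioo a r \ (L₁ ∪ L₂)) := fun t ht =>
      (em (t ∈ L₁ ∪ L₂)).imp id fun h => ⟨ht, h⟩
    calc ENNReal.ofReal (r - a) = volume (Ioo a r) := by rw [Real.volume_Ioo]
      _ ≤ volume (L₁ ∪ L₂) + volume (Ioo a r \ (L₁ ∪ L₂)) :=
          (measure_mono hss).trans (measure_union_le _ _)
      _ = volume (L₁ ∪ L₂) := by rw [hcover, add_zero]
      _ ≤ volume L₁ + volume L₂ := measure_union_le _ _
  have hfinIoo : volume (Ioo a r) ≠ ⊤ := by rw [Real.volume_Ioo]; exact ENNReal.ofReal_ne_top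
  have hra : r - a = r / 2 := by rw [ha_def]; ring
  -- f a nonneg etc
  have hamem : a ∈ Ioo 0 s := ⟨ha0, has⟩
  have hfa : 0 ≤ f a := hpos a hamem
  have hfr0 : 0 ≤ f r := hpos r ⟨hr0, hrs⟩
  have hpow_eq : gf r ^ (m + 1) = f r := by
    rw [hgf_def]
    simp only
    rw [← Real.rpow_natCast (f r ^ ((1 : ℝ) / (m + 1 : ℕ))) (m + 1),
      ← Real.rpow_mul hfr0, one_div, inv_mul_cancel₀, Real.rpow_one]
    exact_mod_cast Nat.succ_ne_zero m
  by_cases hcase : ENNReal.ofReal (r / 4) ≤ volume L₂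
  · -- L₂ big
    have hfin2 : volume L₂ ≠ ⊤ :=
      ((measure_mono inter_subset_left).trans_lt hfinIoo.lt_top).ne
    have htr : r / 4 ≤ (volume L₂).toReal :=
      (ENNReal.ofReal_le_iff_le_toReal hfin2).1 hcase
    have hchain : c * (r / 4) ≤ gf r := by
      have h2 : ∫ _ in L₂, c ∂volume = (volume L₂).toReal * c := by
        rw [setIntegral_const, smul_eq_mul]; rfl
      have h3 : ∫ _ in L₂, c ∂volume ≤ ∫ t in L₂, deriv gf t := by
        refine setIntegral_mono_on (integrableOn_const hfin2)
          (hintg.mono_set fun t ht => ⟨ht.1.1, ht.1.2.le⟩) hL₂m fun t ht => ht.2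
      have h4 : ∫ t in L₂, deriv gf t ≤ ∫ t in Ioc a r, deriv gf t :=
        setIntegral_mono_set hintg hnng
          (HasSubset.Subset.eventuallyLE fun t ht => ⟨ht.1.1, ht.1.2.le⟩)
      have h5 : ∫ t in Ioc a r, deriv gf t = ∫ t in a..r, deriv gf t :=
        (intervalIntegral.integral_of_le har).symm
      have h6 := hDg a r ha0 har hrs
      have hga : 0 ≤ gf a := Real.rpow_nonneg hfa _
      have : c * (r / 4) ≤ (volume L₂).toReal * c := by
        rw [mul_comm]; exact mul_le_mul_of_nonneg_right htr hc.le
      rw [hgf_def] at hga ⊢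
      simp only at h6 ⊢
      nlinarith [h2, h3, h4, h5, h6, hga]
    have hfr : (c * (r / 4)) ^ (m + 1) ≤ f r := by
      calc (c * (r / 4)) ^ (m + 1) ≤ gf r ^ (m + 1) :=
            pow_le_pow_left₀ (by positivity) hchain _
        _ = f r := hpow_eq
    calc min ((c / 4) ^ (m + 1)) (c / 2 ^ (m + 2)) * r ^ (m + 1)
        ≤ (c / 4) ^ (m + 1) * r ^ (m + 1) :=
          mul_le_mul_of_nonneg_right (min_le_left _ _) (by positivity)
      _ = (c * (r / 4)) ^ (m + 1) := by rw [← mul_pow]; ring_nf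
      _ ≤ f r := hfr
  · -- L₁ big
    have hc1 : ENNReal.ofReal (r / 4) ≤ volume L₁ := by
      by_contra h
      have hlt := ENNReal.add_lt_add (not_le.1 h) (not_le.1 hcase)
      rw [← ENNReal.ofReal_add (by positivity) (by positivity)] at hlt
      have heq : (r / 4 + r / 4 : ℝ) = r - a := by rw [hra]; ring
      rw [heq] at hlt
      exact absurd (hμIoo.trans_lt hlt) (lt_irrefl _)
    have hfin1 : volume L₁ ≠ ⊤ :=
      ((measure_mono inter_subset_left).trans_lt hfinIoo.lt_top).ne
    have htr : r / 4 ≤ (volume L₁).toReal :=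
      (ENNReal.ofReal_le_iff_le_toReal hfin1).1 hc1
    have hchain : (r / 4) * (c * a ^ m) ≤ f r := by
      have h2 : ∫ _ in L₁, c * a ^ m ∂volume = (volume L₁).toReal * (c * a ^ m) := by
        rw [setIntegral_const, smul_eq_mul]; rfl
      have h3 : ∫ _ in L₁, c * a ^ m ∂volume ≤ ∫ t in L₁, deriv f t := by
        refine setIntegral_mono_on (integrableOn_const hfin1)
          (hintf.mono_set fun t ht => ⟨ht.1.1, ht.1.2.le⟩) hL₁m fun t ht => ?_
        refine le_trans ?_ ht.2
        exact mul_le_mul_of_nonneg_left (pow_le_pow_left₀ ha0.le ht.1.1.le m) hc.le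
      have h4 : ∫ t in L₁, deriv f t ≤ ∫ t in Ioc a r, deriv f t :=
        setIntegral_mono_set hintf hnnf
          (HasSubset.Subset.eventuallyLE fun t ht => ⟨ht.1.1, ht.1.2.le⟩)
      have h5 : ∫ t in Ioc a r, deriv f t = ∫ t in a..r, deriv f t :=
        (intervalIntegral.integral_of_le har).symm
      have h6 := hDf a r ha0 har hrs
      have hca : 0 ≤ c * a ^ m := by positivity
      nlinarith [h2, h3, h4, h5, h6, hfa, mul_le_mul_of_nonneg_right htr hca]
    calc min ((c / 4) ^ (m + 1)) (c / 2 ^ (m + 2)) * r ^ (m + 1)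
        ≤ c / 2 ^ (m + 2) * r ^ (m + 1) :=
          mul_le_mul_of_nonneg_right (min_le_right _ _) (by positivity)
      _ = (r / 4) * (c * a ^ m) := by
          rw [ha_def, div_pow, pow_succ, pow_add]
          field_simp
          ring
      _ ≤ f r := hchain
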